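/- Let c, d ≥ 2 be integers and let k ≤ 0 be an integer. Let q be the unique integer with 0 ≤ q < c+d-2 and min(c-1,d-1)·(1-k) ≡ q (mod c+d-2). Then |W̃_k| + |X̃_k| + (gcd(c-1,d-1) - 1)·|Ỹ_k| + Σ_{j=1}^{d-1} |Z̃_{j,k}| equals: gcd(c-1,d-1) + 1 if q = 0; q + 1 if 1 ≤ q ≤ min(c,d) - 1; min(c,d) if min(c,d) - 1 < q ≤ max(c,d) - 1; and (c+d-2) - q + 1 if max(c,d) - 1 < q ≤ (c+d-2) - 1. -/

import Mathlib

set_option maxHeartbeats 1000000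

private lemma ediv_eq_of' {N x t : ℤ} (hN : 0 < N) (h1 : N * t ≤ x) (h2 : x < N * t + N) :
    x / N = t := by
  have h3 : t ≤ x / N := (Int.le_ediv_iff_mul_le hN).2 (by linarith)
  have h4 : x / N < t + 1 := (Int.ediv_lt_iff_lt_mul hN).2 (by linarith)
  omega

private lemma count_mult' {N : ℤ} (hN : 0 < N) (a b : ℤ) (hab : a ≤ b + 1) :
    ({m : ℤ | a ≤ N * m ∧ N * m ≤ b}.ncard : ℤ) = b / N - (a - 1) / N := by
  have hset : {m : ℤ | a ≤ N * m ∧ N * m ≤ b} = ↑(Finset.Icc ((a - 1) / N + 1) (b / N)) := by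
    ext m
    simp only [Set.mem_setOf_eq, Finset.coe_Icc, Set.mem_Icc]
    constructor
    · rintro ⟨h1, h2⟩
      refine ⟨?_, (Int.le_ediv_iff_mul_le hN).2 (by linarith)⟩
      have : (a - 1) / N < m := (Int.ediv_lt_iff_lt_mul hN).2 (by linarith)
      omega
    · rintro ⟨h1, h2⟩
      have h2' : m * N ≤ b := (Int.le_ediv_iff_mul_le hN).1 h2
      have h1' : a - 1 < m * N := (Int.ediv_lt_iff_lt_mul hN).1 (by omega)
      exact ⟨by linarith, by linarith⟩
  rw [hset, Set.ncard_coe_finset, Int.card_Icc]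
  have : (a - 1) / N ≤ b / N := Int.ediv_le_ediv hN (by omega)
  omega

/-- Theorem 4.5 (loop type): the combinatorial formula for the rank of
`SH^{2k}` of the Milnor fiber of `x₁²+x₂²+x₃^c x₄+x₃ x₄^d`. -/
theorem loop_rank_formula (c d k q : ℤ) (hc : 2 ≤ c) (hd : 2 ≤ d) (hk : k ≤ 0)
    (hq0 : 0 ≤ q) (hq1 : q < c + d - 2)
    (hq : min (c - 1) (d - 1) * (1 - k) ≡ q [ZMOD (c + d - 2)]) :
    (({m : ℤ | m ≤ -k ∧ 1 ≤ -(c + d - 2) * m - (c - 1) * k ∧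
          -(c + d - 2) * m - (c - 1) * k ≤ 2 * (d - 1)}.ncard : ℤ) +
      ({m : ℤ | 0 ≤ m ∧ 0 ≤ (c + d - 2) * m + (c - 1) * k ∧
          (c + d - 2) * m + (c - 1) * k ≤ c - 1}.ncard : ℤ) +
      ((Int.gcd (c - 1) (d - 1) : ℤ) - 1) *
        ({m : ℤ | 0 ≤ m ∧ (c + d - 2) * m = (c - 1) * (1 - k)}.ncard : ℤ) +
      ∑ j ∈ Finset.Icc (1 : ℤ) (d - 1),
        ({m : ℤ | 1 ≤ (c + d - 2) * m + j + (c - 1) * k ∧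
            (c + d - 2) * m + j + (c - 1) * k ≤ c - 2}.ncard : ℤ)) =
      if q = 0 then (Int.gcd (c - 1) (d - 1) : ℤ) + 1
      else if q ≤ min c d - 1 then q + 1
      else if q ≤ max c d - 1 then min c d
      else (c + d - 2) - q + 1 := by
  obtain ⟨N, hN_def⟩ : ∃ N : ℤ, N = c + d - 2 := ⟨_, rfl⟩
  simp only [← hN_def] at hq1 hq ⊢
  have hN : 0 < N := by omega
  obtain ⟨A, hA⟩ : ∃ A : ℤ, (c - 1) * k = -A := ⟨-((c - 1) * k), by ring⟩
  have hApos : 0 ≤ A := by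
    have h0 : (c - 1) * k ≤ 0 := mul_nonpos_of_nonneg_of_nonpos (by linarith) hk
    linarith
  -- the floor data
  obtain ⟨m0, v, hNm0, hv1, hv2⟩ : ∃ m0 v : ℤ, N * m0 = A - v ∧ 3 - c ≤ v ∧ v ≤ d := by
    refine ⟨(A + c - 3) / N, A - N * ((A + c - 3) / N), by ring, ?_, ?_⟩
    · have e1 := Int.mul_ediv_add_emod (A + c - 3) N
      have e2 := Int.emod_nonneg (A + c - 3) hN.ne'
      linarith
    · have e1 := Int.mul_ediv_add_emod (A + c - 3) N
      have e3 := Int.emod_lt_of_pos (A + c - 3) hN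
      linarith
  have key : ∀ x t : ℤ, A - v + N * t ≤ x → x < A - v + N * t + N → x / N = m0 + t := by
    intro x t h1 h2
    have h3 : N * (m0 + t) = A - v + N * t := by rw [mul_add, hNm0]
    exact ediv_eq_of' hN (by linarith) (by linarith)
  -- the set translations
  have hWeq : {m : ℤ | m ≤ -k ∧ 1 ≤ -N * m - (c - 1) * k ∧ -N * m - (c - 1) * k ≤ 2 * (d - 1)}
      = {m : ℤ | A - 2 * d + 2 ≤ N * m ∧ N * m ≤ A - 1} := by
    ext m
    simp only [Set.mem_setOf_eq]
    constructor
    · rintro ⟨h1, h2, h3⟩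
      constructor <;> linarith
    · rintro ⟨h1, h2⟩
      have hm : m < -k := by
        have hNk : N * (-k) = A + (d - 1) * (-k) := by
          rw [hN_def]; linear_combination -hA
        have hd1 : 0 ≤ (d - 1) * (-k) :=
          mul_nonneg (by linarith) (by linarith)
        have : N * m < N * (-k) := by linarith
        exact lt_of_mul_lt_mul_left this (le_of_lt hN)
      exact ⟨le_of_lt hm, by linarith, by linarith⟩
  have hXeq : {m : ℤ | 0 ≤ m ∧ 0 ≤ N * m + (c - 1) * k ∧ N * m + (c - 1) * k ≤ c - 1}
      = {m : ℤ | A ≤ N * m ∧ N * m ≤ A + c - 1} := by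
    ext m
    simp only [Set.mem_setOf_eq]
    constructor
    · rintro ⟨h1, h2, h3⟩
      constructor <;> linarith
    · rintro ⟨h1, h2⟩
      have hm : 0 ≤ m := by
        by_contra h
        push_neg at h
        have : 0 < N * (-m) := mul_pos hN (by linarith)
        linarith
      exact ⟨hm, by linarith, by linarith⟩
  have hZeq : ∀ j : ℤ, {m : ℤ | 1 ≤ N * m + j + (c - 1) * k ∧ N * m + j + (c - 1) * k ≤ c - 2}
      = {m : ℤ | A - j + 1 ≤ N * m ∧ N * m ≤ A + c - 2 - j} := by
    intro j
    ext m
    simp only [Set.mem_setOf_eq]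
    constructor
    · rintro ⟨h1, h2⟩
      constructor <;> linarith
    · rintro ⟨h1, h2⟩
      constructor <;> linarith
  -- cardinalities
  have hWc : ({m : ℤ | m ≤ -k ∧ 1 ≤ -N * m - (c - 1) * k ∧
      -N * m - (c - 1) * k ≤ 2 * (d - 1)}.ncard : ℤ) = (A - 1) / N - (A - 2 * d + 1) / N := by
    rw [hWeq, count_mult' hN _ _ (by linarith)]
    have : A - 2 * d + 2 - 1 = A - 2 * d + 1 := by ring
    rw [this]
  have hXc : ({m : ℤ | 0 ≤ m ∧ 0 ≤ N * m + (c - 1) * k ∧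
      N * m + (c - 1) * k ≤ c - 1}.ncard : ℤ) = (A + c - 1) / N - (A - 1) / N := by
    rw [hXeq, count_mult' hN _ _ (by linarith)]
  -- quotient evaluations
  have hq1' : (A + c - 1) / N = if d - 1 ≤ v then m0 + 1 else m0 := by
    split_ifs with h
    · exact key _ 1 (by omega) (by omega)
    · simpa using key _ 0 (by omega) (by omega)
  have hq2' : (A - 2 * d + 1) / N = if d - c + 1 ≤ v then m0 - 1 else m0 - 2 := by
    split_ifs with h
    · simpa [sub_eq_add_neg] using key _ (-1) (by omega) (by omega)
    · simpa [sub_eq_add_neg] using key _ (-2) (by omega) (by omega)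
  -- Y set
  have hYone : (c - 1) * (1 - k) = c - 1 + A := by linear_combination -hA
  have hYc : ({m : ℤ | 0 ≤ m ∧ N * m = (c - 1) * (1 - k)}.ncard : ℤ)
      = if v = d - 1 then 1 else 0 := by
    split_ifs with h
    · have hset : {m : ℤ | 0 ≤ m ∧ N * m = (c - 1) * (1 - k)} = {m0 + 1} := by
        ext m
        simp only [Set.mem_setOf_eq, Set.mem_singleton_iff, hYone]
        constructor
        · rintro ⟨h1, h2⟩
          have heq : N * m = N * (m0 + 1) := by
            rw [mul_add, mul_one, hNm0]; omega
          exact mul_left_cancel₀ (ne_of_gt hN) heq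
        · rintro rfl
          have hval : N * (m0 + 1) = c - 1 + A := by
            rw [mul_add, mul_one, hNm0]; omega
          refine ⟨?_, hval⟩
          by_contra h'
          push_neg at h'
          have : N * (m0 + 1) ≤ 0 :=
            mul_nonpos_of_nonneg_of_nonpos (le_of_lt hN) (by omega)
          omega
      rw [hset, Set.ncard_singleton]
      norm_num
    · have hset : {m : ℤ | 0 ≤ m ∧ N * m = (c - 1) * (1 - k)} = ∅ := by
        ext m
        simp only [Set.mem_setOf_eq, Set.mem_empty_iff_false, iff_false, not_and, hYone]
        intro h1 h2
        have hw : N * (m - m0) = v + c - 1 := by rw [mul_sub, hNm0]; linarith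
        rcases lt_trichotomy (m - m0) 1 with hw1 | hw1 | hw1
        · have : N * (m - m0) ≤ 0 :=
            mul_nonpos_of_nonneg_of_nonpos (le_of_lt hN) (by omega)
          linarith
        · rw [hw1, mul_one] at hw
          omega
        · have : N * 2 ≤ N * (m - m0) :=
            mul_le_mul_of_nonneg_left (by omega) (le_of_lt hN)
          have h2N : N * 2 = 2 * c + 2 * d - 4 := by rw [hN_def]; ring
          omega
      rw [hset]
      simp
  -- the Z sum
  have hsum : (∑ j ∈ Finset.Icc (1 : ℤ) (d - 1),
      ({m : ℤ | 1 ≤ N * m + j + (c - 1) * k ∧ N * m + j + (c - 1) * k ≤ c - 2}.ncard : ℤ))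
      = ((Finset.Icc (max 1 (v + 1)) (min (d - 1) (v + c - 2))).card : ℤ) := by
    have hterm : ∀ j ∈ Finset.Icc (1 : ℤ) (d - 1),
        ({m : ℤ | 1 ≤ N * m + j + (c - 1) * k ∧ N * m + j + (c - 1) * k ≤ c - 2}.ncard : ℤ)
        = if v + 1 ≤ j ∧ j ≤ v + c - 2 then 1 else 0 := by
      intro j hj
      rw [Finset.mem_Icc] at hj
      rw [hZeq j, count_mult' hN _ _ (by linarith)]
      have harith : A - j + 1 - 1 = A - j := by ring
      rw [harith]
      have e1 : (A + c - 2 - j) / N = if j ≤ v + c - 2 then m0 else m0 - 1 := by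
        split_ifs with h
        · simpa using key _ 0 (by omega) (by omega)
        · simpa [sub_eq_add_neg] using key _ (-1) (by omega) (by omega)
      have e2 : (A - j) / N = if j ≤ v then m0 else m0 - 1 := by
        split_ifs with h
        · simpa using key _ 0 (by omega) (by omega)
        · simpa [sub_eq_add_neg] using key _ (-1) (by omega) (by omega)
      rw [e1, e2]
      split_ifs <;> omega
    rw [Finset.sum_congr rfl hterm, Finset.sum_boole]
    congr 1
    congr 1
    ext x
    simp only [Finset.mem_filter, Finset.mem_Icc, le_max_iff, min_le_iff, max_le_iff,
      le_min_iff]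
    omega
  -- derive the value of q
  have hqval : (c ≤ d ∧ (q = v + c - 1 ∨ q = v - d + 1)) ∨
      (d < c ∧ (q = d - 1 - v ∨ q = N + d - 1 - v)) := by
    rcases le_or_gt c d with hcd | hcd
    · left
      refine ⟨hcd, ?_⟩
      have hmin : min (c - 1) (d - 1) = c - 1 := min_eq_left (by omega)
      have hdvd0 : N ∣ q - min (c - 1) (d - 1) * (1 - k) := hq.dvd
      rw [hmin] at hdvd0
      obtain ⟨t, ht⟩ := hdvd0
      have hw : q - (v + c - 1) = N * (t + m0) := by
        rw [mul_add, hNm0]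
        have : (c - 1) * (1 - k) = c - 1 + A := hYone
        linarith
      set w : ℤ := t + m0 with hwdef
      have hwb : -1 ≤ w ∧ w ≤ 0 := by
        constructor
        · by_contra h
          push_neg at h
          have : N * w ≤ N * (-2) := mul_le_mul_of_nonneg_left (by omega) (le_of_lt hN)
          have h2N : N * (-2) = -(2 * c) - 2 * d + 4 := by rw [hN_def]; ring
          omega
        · by_contra h
          push_neg at h
          have : N * 1 ≤ N * w := mul_le_mul_of_nonneg_left (by omega) (le_of_lt hN)
          have h1N : N * 1 = c + d - 2 := by rw [hN_def]; ring
          omega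
      have hw0 : w = 0 ∨ w = -1 := by omega
      rcases hw0 with h | h <;> rw [h] at hw
      · left; omega
      · right
        have : N * (-1) = -(c + d - 2) := by rw [hN_def]; ring
        omega
    · right
      refine ⟨hcd, ?_⟩
      have hmin : min (c - 1) (d - 1) = d - 1 := min_eq_right (by omega)
      have hdvd0 : N ∣ q - min (c - 1) (d - 1) * (1 - k) := hq.dvd
      rw [hmin] at hdvd0
      obtain ⟨t, ht⟩ := hdvd0
      have hdk : (d - 1) * (1 - k) = d - 1 - N * k - A := by
        rw [hN_def]; linear_combination hA
      have hw : q - (d - 1 - v) = N * (t - k - m0) := by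
        rw [mul_sub, mul_sub, hNm0]
        linarith
      set w : ℤ := t - k - m0 with hwdef
      have hwb : 0 ≤ w ∧ w ≤ 1 := by
        constructor
        · by_contra h
          push_neg at h
          have : N * w ≤ N * (-1) := mul_le_mul_of_nonneg_left (by omega) (le_of_lt hN)
          have h1N : N * (-1) = -c - d + 2 := by rw [hN_def]; ring
          omega
        · by_contra h
          push_neg at h
          have : N * 2 ≤ N * w := mul_le_mul_of_nonneg_left (by omega) (le_of_lt hN)
          have h2N : N * 2 = 2 * c + 2 * d - 4 := by rw [hN_def]; ring
          omega
      have hw0 : w = 0 ∨ w = 1 := by omega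
      rcases hw0 with h | h <;> rw [h] at hw
      · left; omega
      · right
        have : N * 1 = c + d - 2 := by rw [hN_def]; ring
        omega
  -- assemble
  rw [hWc, hXc, hYc, hsum, Int.card_Icc]
  generalize ((Int.gcd (c - 1) (d - 1) : ℕ) : ℤ) = g
  rw [hq1', hq2']
  rcases hqval with ⟨hcd, hqv⟩ | ⟨hcd, hqv⟩ <;>
    rcases hqv with hqv | hqv <;> split_ifs <;> omega
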